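/- Let L be a Lie algebra over a field K and let A, B be linear subspaces of L with L = A + B and [A, B] ⊆ B. Then B + [B, B] is a Lie ideal of L. -/
import Mathlib


/-- Let `A`, `B` be linear subspaces of a Lie algebra `L` with `L = A + B` and
`[A, B] ⊆ B`.  Then `B + [B, B]` is a Lie ideal of `L`. -/
theorem lieIdeal_of_add_bracket
    (K : Type*) [Field K] (L : Type*) [LieRing L] [LieAlgebra K L]
    (A B : Submodule K L)
    (hsum : A ⊔ B = ⊤)
    (hbr : ∀ a ∈ A, ∀ b ∈ B, ⁅a, b⁆ ∈ B) :
    ∃ I : LieIdeal K L,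
      (I : Submodule K L)
        = B ⊔ Submodule.span K {z : L | ∃ x ∈ B, ∃ y ∈ B, z = ⁅x, y⁆} := by
  set S : Submodule K L :=
    B ⊔ Submodule.span K {z : L | ∃ x ∈ B, ∃ y ∈ B, z = ⁅x, y⁆} with hS
  have hBle : B ≤ S := le_sup_left
  have hgen : ∀ x ∈ B, ∀ y ∈ B, ⁅x, y⁆ ∈ S := fun x hx y hy =>
    (le_sup_right : Submodule.span K _ ≤ S)
      (Submodule.subset_span ⟨x, hx, y, hy, rfl⟩)
  -- step 1 : bracket of anything with an element of B lands in S
  have step1 : ∀ x : L, ∀ b ∈ B, ⁅x, b⁆ ∈ S := by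
    intro x b hb
    have hx : x ∈ A ⊔ B := by rw [hsum]; exact Submodule.mem_top
    obtain ⟨a, ha, b', hb', rfl⟩ := Submodule.mem_sup.mp hx
    rw [add_lie]
    exact S.add_mem (hBle (hbr a ha b hb)) (hgen b' hb' b hb)
  -- step 2 : S is closed under bracket with anything
  have key : ∀ x : L, ∀ m ∈ S, ⁅x, m⁆ ∈ S := by
    intro x m hm
    have spanlem : ∀ s ∈ Submodule.span K {z : L | ∃ x ∈ B, ∃ y ∈ B, z = ⁅x, y⁆},
        ⁅x, s⁆ ∈ S := by
      intro s hs
      induction hs using Submodule.span_induction with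
      | mem z hz =>
          obtain ⟨b1, hb1, b2, hb2, rfl⟩ := hz
          rw [leibniz_lie]
          refine S.add_mem (step1 _ b2 hb2) ?_
          have : ⁅b1, ⁅x, b2⁆⁆ = -⁅⁅x, b2⁆, b1⁆ := by rw [lie_skew]
          rw [this]
          exact S.neg_mem (step1 _ b1 hb1)
      | zero => simp
      | add u v _ _ hu hv => rw [lie_add]; exact S.add_mem hu hv
      | smul c u _ hu => rw [lie_smul]; exact S.smul_mem c hu
    obtain ⟨b, hb, s, hs, rfl⟩ := Submodule.mem_sup.mp hm
    rw [lie_add]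
    exact S.add_mem (step1 x b hb) (spanlem s hs)
  exact ⟨{ S with lie_mem := fun {x m} hm => key x m hm }, rfl⟩
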